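/- Define v_{TA} = inf { Σ_{a∈A} ω_a‖x − a‖_{p_A} + Σ_{b∈B} ω_b (‖x − y¹_b‖_{p_A} + ‖y¹_b − y²_b‖_{p_H} + ‖y²_b − b‖_{p_B}) : x ∈ ℝ^d with αᵀx ≤ β, and y¹_b, y²_b ∈ 𝓗 for all b ∈ B } and v_{TB} = inf { Σ_{b∈B} ω_b‖x − b‖_{p_B} + Σ_{a∈A} ω_a (‖x − y¹_a‖_{p_B} + ‖y¹_a − y²_a‖_{p_H} + ‖y²_a − a‖_{p_A}) : x ∈ ℝ^d with αᵀx ≥ β, and y¹_a, y²_a ∈ 𝓗 for all a ∈ A }. Then the optimal value of Problem (PT) equals min{v_{TA}, v_{TB}}; in particular, if x* is an optimal solution of (PT), then x* is the x-component of an optimal solution of the restricted problem achieving this minimum. -/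

import Mathlib

open scoped ENNReal BigOperators

/-- The `ℓ_p` norm on `ℝ^d` for `p : ℝ≥0∞` (intended for `1 ≤ p ≤ ∞`). -/
noncomputable def lpNorm {d : ℕ} (p : ℝ≥0∞) (x : Fin d → ℝ) : ℝ :=
  if p = ∞ then ⨆ k, |x k| else (∑ k, |x k| ^ p.toReal) ^ (1 / p.toReal)

lemma lpNorm_eq_norm {d : ℕ} {p : ℝ≥0∞} (hp : 1 ≤ p) (x : Fin d → ℝ) :
    lpNorm p x = ‖((WithLp.equiv p (Fin d → ℝ)).symm x : PiLp p (fun _ : Fin d => ℝ))‖ := by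
  haveI : Fact (1 ≤ p) := ⟨hp⟩
  by_cases h : p = ∞
  · subst h
    rw [lpNorm, if_pos rfl, PiLp.norm_eq_ciSup]
    simp [Real.norm_eq_abs]
  · have hpt : 0 < p.toReal :=
      ENNReal.toReal_pos (by intro h0; rw [h0] at hp; exact absurd hp (by norm_num)) h
    rw [lpNorm, if_neg h, PiLp.norm_eq_sum hpt]
    simp [Real.norm_eq_abs]

lemma lpNorm_nonneg {d : ℕ} {p : ℝ≥0∞} (hp : 1 ≤ p) (x : Fin d → ℝ) :
    0 ≤ lpNorm p x := by
  haveI : Fact (1 ≤ p) := ⟨hp⟩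
  rw [lpNorm_eq_norm hp]; exact norm_nonneg _

lemma lpNorm_sub_comm {d : ℕ} {p : ℝ≥0∞} (hp : 1 ≤ p) (x y : Fin d → ℝ) :
    lpNorm p (x - y) = lpNorm p (y - x) := by
  haveI : Fact (1 ≤ p) := ⟨hp⟩
  rw [lpNorm_eq_norm hp, lpNorm_eq_norm hp]
  exact norm_sub_rev ((WithLp.equiv p (Fin d → ℝ)).symm x) ((WithLp.equiv p (Fin d → ℝ)).symm y)

lemma lpNorm_add_smul_le {d : ℕ} {p : ℝ≥0∞} (hp : 1 ≤ p) (u w : Fin d → ℝ) (c : ℝ) :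
    lpNorm p (u + c • w) ≤ lpNorm p u + |c| * lpNorm p w := by
  haveI : Fact (1 ≤ p) := ⟨hp⟩
  rw [lpNorm_eq_norm hp, lpNorm_eq_norm hp, lpNorm_eq_norm hp]
  calc ‖((WithLp.equiv p (Fin d → ℝ)).symm (u + c • w) : PiLp p (fun _ : Fin d => ℝ))‖
      = ‖((WithLp.equiv p (Fin d → ℝ)).symm u + c • (WithLp.equiv p (Fin d → ℝ)).symm w :
          PiLp p (fun _ : Fin d => ℝ))‖ := rfl
    _ ≤ _ := by
        refine (norm_add_le _ _).trans ?_
        rw [norm_smul, Real.norm_eq_abs]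

lemma continuous_lpNorm {d : ℕ} {p : ℝ≥0∞} (hp : 1 ≤ p) :
    Continuous (lpNorm p : (Fin d → ℝ) → ℝ) := by
  haveI : Fact (1 ≤ p) := ⟨hp⟩
  have : (lpNorm p : (Fin d → ℝ) → ℝ) = fun x =>
      ‖((WithLp.equiv p (Fin d → ℝ)).symm x : PiLp p (fun _ : Fin d => ℝ))‖ := by
    funext x; exact lpNorm_eq_norm hp x
  rw [this]
  exact continuous_norm.comp (PiLp.continuous_toLp p _)

lemma pi_norm_le_lpNorm {d : ℕ} {p : ℝ≥0∞} (hp : 1 ≤ p) (v : Fin d → ℝ) :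
    ‖v‖ ≤ lpNorm p v := by
  haveI : Fact (1 ≤ p) := ⟨hp⟩
  rw [lpNorm_eq_norm hp]
  have h := (PiLp.lipschitzWith_ofLp p (fun _ : Fin d => ℝ)).dist_le_mul
    ((WithLp.equiv p (Fin d → ℝ)).symm v) 0
  simpa [dist_zero_right] using h

lemma exists_hyperplane_pt {d : ℕ} (α : Fin d → ℝ) (hα : α ≠ 0) (β : ℝ) :
    ∃ x0 : Fin d → ℝ, ∑ i, α i * x0 i = β := by
  have hs : 0 < ∑ i, α i * α i := by
    obtain ⟨i, hi⟩ := Function.ne_iff.mp hα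
    refine Finset.sum_pos' (fun j _ => mul_self_nonneg _) ⟨i, Finset.mem_univ i, ?_⟩
    exact mul_self_pos.mpr hi
  refine ⟨(β / (∑ i, α i * α i)) • α, ?_⟩
  have : ∑ i, α i * ((β / (∑ j, α j * α j)) * α i)
      = (β / (∑ j, α j * α j)) * ∑ i, α i * α i := by
    rw [Finset.mul_sum]; exact Finset.sum_congr rfl fun i _ => by ring
  simpa [Pi.smul_apply, smul_eq_mul] using this.trans (div_mul_cancel₀ _ hs.ne')


noncomputable def gateObj {d : ℕ} (pA pB pH : ℝ≥0∞) (u v : Fin d → ℝ)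
    (zw : (Fin d → ℝ) × (Fin d → ℝ)) : ℝ :=
  lpNorm pA (zw.1 - u) + lpNorm pH (zw.1 - zw.2) + lpNorm pB (zw.2 - v)

lemma gateObj_nonneg {d : ℕ} {pA pB pH : ℝ≥0∞} (hpA : 1 ≤ pA) (hpB : 1 ≤ pB) (hpH : 1 ≤ pH)
    (u v : Fin d → ℝ) (zw : (Fin d → ℝ) × (Fin d → ℝ)) : 0 ≤ gateObj pA pB pH u v zw := by
  have h1 := lpNorm_nonneg hpA (zw.1 - u)
  have h2 := lpNorm_nonneg hpH (zw.1 - zw.2)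
  have h3 := lpNorm_nonneg hpB (zw.2 - v)
  unfold gateObj; linarith

lemma gateObj_exists_min {d : ℕ} {pA pB pH : ℝ≥0∞}
    (hpA : 1 ≤ pA) (hpB : 1 ≤ pB) (hpH : 1 ≤ pH)
    (α : Fin d → ℝ) (hα : α ≠ 0) (β : ℝ) (u v : Fin d → ℝ) :
    ∃ zws : (Fin d → ℝ) × (Fin d → ℝ),
      ((∑ i, α i * zws.1 i = β) ∧ (∑ i, α i * zws.2 i = β)) ∧
      ∀ zw' : (Fin d → ℝ) × (Fin d → ℝ),
        ((∑ i, α i * zw'.1 i = β) ∧ (∑ i, α i * zw'.2 i = β)) →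
        gateObj pA pB pH u v zws ≤ gateObj pA pB pH u v zw' := by
  obtain ⟨x0, hx0⟩ := exists_hyperplane_pt α hα β
  have hfc : Continuous (gateObj pA pB pH u v) := by
    unfold gateObj
    apply Continuous.add
    apply Continuous.add
    · exact (continuous_lpNorm hpA).comp (continuous_fst.sub continuous_const)
    · exact (continuous_lpNorm hpH).comp (continuous_fst.sub continuous_snd)
    · exact (continuous_lpNorm hpB).comp (continuous_snd.sub continuous_const)
  have hc1 : Continuous fun zw : (Fin d → ℝ) × (Fin d → ℝ) => ∑ i, α i * zw.1 i := by
    apply continuous_finset_sum; intro i _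
    exact continuous_const.mul ((continuous_apply i).comp continuous_fst)
  have hc2 : Continuous fun zw : (Fin d → ℝ) × (Fin d → ℝ) => ∑ i, α i * zw.2 i := by
    apply continuous_finset_sum; intro i _
    exact continuous_const.mul ((continuous_apply i).comp continuous_snd)
  have hSclosed : IsClosed {zw : (Fin d → ℝ) × (Fin d → ℝ) |
      (∑ i, α i * zw.1 i = β) ∧ (∑ i, α i * zw.2 i = β)} :=
    (isClosed_eq hc1 continuous_const).inter (isClosed_eq hc2 continuous_const)
  have hKclosed : IsClosed ({zw : (Fin d → ℝ) × (Fin d → ℝ) |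
      (∑ i, α i * zw.1 i = β) ∧ (∑ i, α i * zw.2 i = β)} ∩
      (gateObj pA pB pH u v) ⁻¹' Set.Iic (gateObj pA pB pH u v (x0, x0))) :=
    hSclosed.inter (isClosed_Iic.preimage hfc)
  have hKbdd : Bornology.IsBounded ({zw : (Fin d → ℝ) × (Fin d → ℝ) |
      (∑ i, α i * zw.1 i = β) ∧ (∑ i, α i * zw.2 i = β)} ∩
      (gateObj pA pB pH u v) ⁻¹' Set.Iic (gateObj pA pB pH u v (x0, x0))) := by
    apply Bornology.IsBounded.subset (Metric.isBounded_closedBall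
      (x := ((0, 0) : (Fin d → ℝ) × (Fin d → ℝ)))
      (r := gateObj pA pB pH u v (x0, x0) + ‖u‖ + ‖v‖))
    rintro ⟨z, w⟩ ⟨-, hfz⟩
    simp only [Set.mem_preimage, Set.mem_Iic] at hfz
    have hnH := lpNorm_nonneg hpH (z - w)
    have hnA := lpNorm_nonneg hpA (z - u)
    have hnB := lpNorm_nonneg hpB (w - v)
    rw [gateObj] at hfz
    have h1 : ‖z - u‖ ≤ gateObj pA pB pH u v (x0, x0) :=
      le_trans (pi_norm_le_lpNorm hpA _) (by linarith)
    have h2 : ‖w - v‖ ≤ gateObj pA pB pH u v (x0, x0) :=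
      le_trans (pi_norm_le_lpNorm hpB _) (by linarith)
    have hz : ‖z‖ ≤ gateObj pA pB pH u v (x0, x0) + ‖u‖ := by
      calc ‖z‖ = ‖(z - u) + u‖ := by rw [sub_add_cancel]
        _ ≤ ‖z - u‖ + ‖u‖ := norm_add_le _ _
        _ ≤ _ := by linarith
    have hw : ‖w‖ ≤ gateObj pA pB pH u v (x0, x0) + ‖v‖ := by
      calc ‖w‖ = ‖(w - v) + v‖ := by rw [sub_add_cancel]
        _ ≤ ‖w - v‖ + ‖v‖ := norm_add_le _ _
        _ ≤ _ := by linarith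
    have hun : (0:ℝ) ≤ ‖u‖ := norm_nonneg _
    have hvn : (0:ℝ) ≤ ‖v‖ := norm_nonneg _
    simp only [Metric.mem_closedBall, Prod.dist_eq, dist_zero_right]
    exact max_le (by linarith) (by linarith)
  have hKcompact := Metric.isCompact_of_isClosed_isBounded hKclosed hKbdd
  have hx0K : ((x0, x0) : (Fin d → ℝ) × (Fin d → ℝ)) ∈
      ({zw : (Fin d → ℝ) × (Fin d → ℝ) |
        (∑ i, α i * zw.1 i = β) ∧ (∑ i, α i * zw.2 i = β)} ∩
        (gateObj pA pB pH u v) ⁻¹' Set.Iic (gateObj pA pB pH u v (x0, x0))) :=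
    ⟨⟨hx0, hx0⟩, Set.mem_preimage.mpr (Set.mem_Iic.mpr (le_refl _))⟩
  obtain ⟨zws, hzwsK, hmin⟩ := hKcompact.exists_isMinOn ⟨(x0, x0), hx0K⟩ hfc.continuousOn
  refine ⟨zws, hzwsK.1, ?_⟩
  intro zw' hzw'
  by_cases hle : gateObj pA pB pH u v zw' ≤ gateObj pA pB pH u v (x0, x0)
  · exact hmin ⟨hzw', hle⟩
  · exact le_trans (hmin hx0K) (le_of_not_ge hle)

lemma exists_gate_min {d : ℕ} {pA pB pH : ℝ≥0∞}
    (hpA : 1 ≤ pA) (hpB : 1 ≤ pB) (hpH : 1 ≤ pH)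
    (α : Fin d → ℝ) (hα : α ≠ 0) (β : ℝ) (u v : Fin d → ℝ) :
    ∃ zw : {zw : (Fin d → ℝ) × (Fin d → ℝ) //
        (∑ i, α i * zw.1 i = β) ∧ (∑ i, α i * zw.2 i = β)},
      (⨅ zw' : {zw : (Fin d → ℝ) × (Fin d → ℝ) //
          (∑ i, α i * zw.1 i = β) ∧ (∑ i, α i * zw.2 i = β)},
        lpNorm pA (zw'.1.1 - u) + lpNorm pH (zw'.1.1 - zw'.1.2) + lpNorm pB (zw'.1.2 - v))
      = lpNorm pA (zw.1.1 - u) + lpNorm pH (zw.1.1 - zw.1.2) + lpNorm pB (zw.1.2 - v) := by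
  obtain ⟨zws, hzwsS, hglobal⟩ := gateObj_exists_min hpA hpB hpH α hα β u v
  refine ⟨⟨zws, hzwsS⟩, ?_⟩
  have hbdd : BddBelow (Set.range (fun zw' : {zw : (Fin d → ℝ) × (Fin d → ℝ) //
      (∑ i, α i * zw.1 i = β) ∧ (∑ i, α i * zw.2 i = β)} =>
      lpNorm pA (zw'.1.1 - u) + lpNorm pH (zw'.1.1 - zw'.1.2) + lpNorm pB (zw'.1.2 - v))) := by
    refine ⟨0, ?_⟩
    rintro r ⟨zw', rfl⟩
    exact gateObj_nonneg hpA hpB hpH u v zw'.1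
  haveI hne : Nonempty {zw : (Fin d → ℝ) × (Fin d → ℝ) //
      (∑ i, α i * zw.1 i = β) ∧ (∑ i, α i * zw.2 i = β)} := ⟨⟨zws, hzwsS⟩⟩
  apply le_antisymm
  · exact ciInf_le hbdd ⟨zws, hzwsS⟩
  · exact le_ciInf fun zw' => hglobal zw'.1 zw'.2

lemma sum_mul_self_pos {d : ℕ} {α : Fin d → ℝ} (hα : α ≠ 0) : 0 < ∑ i, α i * α i := by
  obtain ⟨i, hi⟩ := Function.ne_iff.mp hα
  refine Finset.sum_pos' (fun j _ => mul_self_nonneg _) ⟨i, Finset.mem_univ i, ?_⟩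
  exact mul_self_pos.mpr hi

lemma gate_bdd {d : ℕ} {pA pB pH : ℝ≥0∞} (hpA : 1 ≤ pA) (hpB : 1 ≤ pB) (hpH : 1 ≤ pH)
    (α : Fin d → ℝ) (β : ℝ) (u v : Fin d → ℝ) :
    BddBelow (Set.range (fun zw' : {zw : (Fin d → ℝ) × (Fin d → ℝ) //
      (∑ i, α i * zw.1 i = β) ∧ (∑ i, α i * zw.2 i = β)} =>
      lpNorm pA (zw'.1.1 - u) + lpNorm pH (zw'.1.1 - zw'.1.2) + lpNorm pB (zw'.1.2 - v))) := by
  refine ⟨0, ?_⟩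
  rintro r ⟨zw', rfl⟩
  exact gateObj_nonneg hpA hpB hpH u v zw'.1

/-- The transit distance (two gate points, traveling along the hyperplane with
norm `ℓ_{p_H}` allowed). -/
noncomputable def transDist {d : ℕ} (pA pB pH : ℝ≥0∞) (α : Fin d → ℝ) (β : ℝ)
    (x y : Fin d → ℝ) : ℝ :=
  if ∑ i, α i * x i ≤ β then
    (if ∑ i, α i * y i ≤ β then lpNorm pA (x - y)
     else ⨅ zw : {zw : (Fin d → ℝ) × (Fin d → ℝ) //
            (∑ i, α i * zw.1 i = β) ∧ (∑ i, α i * zw.2 i = β)},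
        lpNorm pA (zw.1.1 - x) + lpNorm pH (zw.1.1 - zw.1.2) + lpNorm pB (zw.1.2 - y))
  else
    (if ∑ i, α i * y i ≤ β then
       ⨅ zw : {zw : (Fin d → ℝ) × (Fin d → ℝ) //
            (∑ i, α i * zw.1 i = β) ∧ (∑ i, α i * zw.2 i = β)},
         lpNorm pA (zw.1.1 - y) + lpNorm pH (zw.1.1 - zw.1.2) + lpNorm pB (zw.1.2 - x)
     else lpNorm pB (x - y))

lemma transDist_nonneg {d : ℕ} {pA pB pH : ℝ≥0∞}
    (hpA : 1 ≤ pA) (hpB : 1 ≤ pB) (hpH : 1 ≤ pH)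
    (α : Fin d → ℝ) (β : ℝ) (x y : Fin d → ℝ) :
    0 ≤ transDist pA pB pH α β x y := by
  rw [transDist]
  split_ifs with h1 h2 h3
  · exact lpNorm_nonneg hpA _
  · exact Real.iInf_nonneg fun zw => gateObj_nonneg hpA hpB hpH x y zw.1
  · exact Real.iInf_nonneg fun zw => gateObj_nonneg hpA hpB hpH y x zw.1
  · exact lpNorm_nonneg hpB _

set_option maxHeartbeats 1000000 in
/-- Theorem: the optimal value of problem (PT) equals `min {v_{TA}, v_{TB}}`,
where `v_{TA}` (resp. `v_{TB}`) is the optimal value of the restricted problem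
(PT_A) (resp. (PT_B)); in particular, an optimal solution `x*` of (PT) is the
`x`-component of an optimal solution of the restricted problem achieving the
minimum. -/
theorem stmt_16 {d : ℕ} (pA pB pH : ℝ≥0∞)
    (hpA : 1 ≤ pA) (hpB : 1 ≤ pB) (hpH : 1 ≤ pH)
    (α : Fin d → ℝ) (hα : α ≠ 0) (β : ℝ)
    (A B : Finset (Fin d → ℝ))
    (hAH : ∀ a ∈ A, ∑ i, α i * a i ≤ β) (hBH : ∀ b ∈ B, β < ∑ i, α i * b i)
    (ω : (Fin d → ℝ) → ℝ) (hωA : ∀ a ∈ A, 0 < ω a) (hωB : ∀ b ∈ B, 0 < ω b)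
    (vTA vTB : ℝ)
    (hvTA : vTA = sInf {v : ℝ | ∃ (x : Fin d → ℝ)
        (y1 y2 : (Fin d → ℝ) → Fin d → ℝ),
        (∑ i, α i * x i ≤ β) ∧
        (∀ b ∈ B, ∑ i, α i * y1 b i = β) ∧ (∀ b ∈ B, ∑ i, α i * y2 b i = β) ∧
        v = (∑ a ∈ A, ω a * lpNorm pA (x - a)) +
          ∑ b ∈ B, ω b * (lpNorm pA (x - y1 b) + lpNorm pH (y1 b - y2 b) +
            lpNorm pB (y2 b - b))})
    (hvTB : vTB = sInf {v : ℝ | ∃ (x : Fin d → ℝ)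
        (y1 y2 : (Fin d → ℝ) → Fin d → ℝ),
        (β ≤ ∑ i, α i * x i) ∧
        (∀ a ∈ A, ∑ i, α i * y1 a i = β) ∧ (∀ a ∈ A, ∑ i, α i * y2 a i = β) ∧
        v = (∑ b ∈ B, ω b * lpNorm pB (x - b)) +
          ∑ a ∈ A, ω a * (lpNorm pB (x - y1 a) + lpNorm pH (y1 a - y2 a) +
            lpNorm pA (y2 a - a))}) :
    (⨅ x : Fin d → ℝ,
        ((∑ a ∈ A, ω a * transDist pA pB pH α β x a) +
          ∑ b ∈ B, ω b * transDist pA pB pH α β x b)) = min vTA vTB ∧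
    ∀ x : Fin d → ℝ,
      (∀ y : Fin d → ℝ,
        (∑ a ∈ A, ω a * transDist pA pB pH α β x a) +
            ∑ b ∈ B, ω b * transDist pA pB pH α β x b ≤
          (∑ a ∈ A, ω a * transDist pA pB pH α β y a) +
            ∑ b ∈ B, ω b * transDist pA pB pH α β y b) →
      ((∑ i, α i * x i ≤ β ∧
          ∃ y1 y2 : (Fin d → ℝ) → Fin d → ℝ,
            (∀ b ∈ B, ∑ i, α i * y1 b i = β) ∧ (∀ b ∈ B, ∑ i, α i * y2 b i = β) ∧
            (∑ a ∈ A, ω a * lpNorm pA (x - a)) +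
              (∑ b ∈ B, ω b * (lpNorm pA (x - y1 b) + lpNorm pH (y1 b - y2 b) +
                lpNorm pB (y2 b - b))) = min vTA vTB) ∨
        (β ≤ ∑ i, α i * x i ∧
          ∃ y1 y2 : (Fin d → ℝ) → Fin d → ℝ,
            (∀ a ∈ A, ∑ i, α i * y1 a i = β) ∧ (∀ a ∈ A, ∑ i, α i * y2 a i = β) ∧
            (∑ b ∈ B, ω b * lpNorm pB (x - b)) +
              (∑ a ∈ A, ω a * (lpNorm pB (x - y1 a) + lpNorm pH (y1 a - y2 a) +
                lpNorm pA (y2 a - a))) = min vTA vTB)) := by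
  classical
  obtain ⟨x0, hx0⟩ := exists_hyperplane_pt α hα β
  have hs : 0 < ∑ i, α i * α i := sum_mul_self_pos hα
  have hTnn : ∀ x y : Fin d → ℝ, 0 ≤ transDist pA pB pH α β x y :=
    fun x y => transDist_nonneg hpA hpB hpH α β x y
  have hgnn : ∀ x : Fin d → ℝ, 0 ≤ (∑ a ∈ A, ω a * transDist pA pB pH α β x a) +
      ∑ b ∈ B, ω b * transDist pA pB pH α β x b := by
    intro x
    have h1 : 0 ≤ ∑ a ∈ A, ω a * transDist pA pB pH α β x a :=
      Finset.sum_nonneg fun a ha => mul_nonneg (hωA a ha).le (hTnn x a)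
    have h2 : 0 ≤ ∑ b ∈ B, ω b * transDist pA pB pH α β x b :=
      Finset.sum_nonneg fun b hb => mul_nonneg (hωB b hb).le (hTnn x b)
    linarith
  have hgbdd : BddBelow (Set.range fun x : Fin d → ℝ =>
      (∑ a ∈ A, ω a * transDist pA pB pH α β x a) +
        ∑ b ∈ B, ω b * transDist pA pB pH α β x b) := by
    refine ⟨0, ?_⟩; rintro r ⟨x, rfl⟩; exact hgnn x
  -- branch lemmas
  have hTaa : ∀ x y : Fin d → ℝ, (∑ i, α i * x i ≤ β) → (∑ i, α i * y i ≤ β) →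
      transDist pA pB pH α β x y = lpNorm pA (x - y) := by
    intro x y hx hy; rw [transDist, if_pos hx, if_pos hy]
  have hTbb : ∀ x y : Fin d → ℝ, ¬(∑ i, α i * x i ≤ β) → ¬(∑ i, α i * y i ≤ β) →
      transDist pA pB pH α β x y = lpNorm pB (x - y) := by
    intro x y hx hy; rw [transDist, if_neg hx, if_neg hy]
  have hTab : ∀ x y : Fin d → ℝ, (∑ i, α i * x i ≤ β) → ¬(∑ i, α i * y i ≤ β) →
      transDist pA pB pH α β x y =
      ⨅ zw : {zw : (Fin d → ℝ) × (Fin d → ℝ) //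
          (∑ i, α i * zw.1 i = β) ∧ (∑ i, α i * zw.2 i = β)},
        lpNorm pA (zw.1.1 - x) + lpNorm pH (zw.1.1 - zw.1.2) + lpNorm pB (zw.1.2 - y) := by
    intro x y hx hy; rw [transDist, if_pos hx, if_neg hy]
  have hTba : ∀ x y : Fin d → ℝ, ¬(∑ i, α i * x i ≤ β) → (∑ i, α i * y i ≤ β) →
      transDist pA pB pH α β x y =
      ⨅ zw : {zw : (Fin d → ℝ) × (Fin d → ℝ) //
          (∑ i, α i * zw.1 i = β) ∧ (∑ i, α i * zw.2 i = β)},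
        lpNorm pA (zw.1.1 - y) + lpNorm pH (zw.1.1 - zw.1.2) + lpNorm pB (zw.1.2 - x) := by
    intro x y hx hy; rw [transDist, if_neg hx, if_pos hy]
  -- exact value representation on the A side
  have hA_val : ∀ x : Fin d → ℝ, (∑ i, α i * x i ≤ β) →
      ∃ y1 y2 : (Fin d → ℝ) → Fin d → ℝ,
        (∀ b ∈ B, ∑ i, α i * y1 b i = β) ∧ (∀ b ∈ B, ∑ i, α i * y2 b i = β) ∧
        (∑ a ∈ A, ω a * lpNorm pA (x - a)) +
          (∑ b ∈ B, ω b * (lpNorm pA (x - y1 b) + lpNorm pH (y1 b - y2 b) +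
            lpNorm pB (y2 b - b))) =
        (∑ a ∈ A, ω a * transDist pA pB pH α β x a) +
          ∑ b ∈ B, ω b * transDist pA pB pH α β x b := by
    intro x hx
    choose gz hgz using fun b : Fin d → ℝ => exists_gate_min hpA hpB hpH α hα β x b
    have heq : (∑ a ∈ A, ω a * lpNorm pA (x - a)) +
        (∑ b ∈ B, ω b * (lpNorm pA (x - (gz b).1.1) + lpNorm pH ((gz b).1.1 - (gz b).1.2) +
          lpNorm pB ((gz b).1.2 - b))) =
        (∑ a ∈ A, ω a * transDist pA pB pH α β x a) +
          ∑ b ∈ B, ω b * transDist pA pB pH α β x b := by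
      congr 1
      · exact Finset.sum_congr rfl fun a ha => by rw [hTaa x a hx (hAH a ha)]
      · refine Finset.sum_congr rfl fun b hb => ?_
        rw [hTab x b hx (not_le.mpr (hBH b hb)), hgz b, lpNorm_sub_comm hpA x ((gz b).1.1)]
    exact ⟨fun b => (gz b).1.1, fun b => (gz b).1.2, fun b _ => (gz b).2.1,
      fun b _ => (gz b).2.2, heq⟩
  -- exact value representation on the B side
  have hB_val : ∀ x : Fin d → ℝ, ¬(∑ i, α i * x i ≤ β) →
      ∃ y1 y2 : (Fin d → ℝ) → Fin d → ℝ,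
        (∀ a ∈ A, ∑ i, α i * y1 a i = β) ∧ (∀ a ∈ A, ∑ i, α i * y2 a i = β) ∧
        (∑ b ∈ B, ω b * lpNorm pB (x - b)) +
          (∑ a ∈ A, ω a * (lpNorm pB (x - y1 a) + lpNorm pH (y1 a - y2 a) +
            lpNorm pA (y2 a - a))) =
        (∑ a ∈ A, ω a * transDist pA pB pH α β x a) +
          ∑ b ∈ B, ω b * transDist pA pB pH α β x b := by
    intro x hx
    choose gz hgz using fun a : Fin d → ℝ => exists_gate_min hpA hpB hpH α hα β a x
    have heq : (∑ b ∈ B, ω b * lpNorm pB (x - b)) +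
        (∑ a ∈ A, ω a * (lpNorm pB (x - (gz a).1.2) + lpNorm pH ((gz a).1.2 - (gz a).1.1) +
          lpNorm pA ((gz a).1.1 - a))) =
        (∑ a ∈ A, ω a * transDist pA pB pH α β x a) +
          ∑ b ∈ B, ω b * transDist pA pB pH α β x b := by
      rw [add_comm (∑ a ∈ A, ω a * transDist pA pB pH α β x a)]
      congr 1
      · exact Finset.sum_congr rfl fun b hb => by
          rw [hTbb x b hx (not_le.mpr (hBH b hb))]
      · refine Finset.sum_congr rfl fun a ha => ?_
        rw [hTba x a hx (hAH a ha), hgz a, lpNorm_sub_comm hpB x ((gz a).1.2),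
          lpNorm_sub_comm hpH ((gz a).1.2) ((gz a).1.1)]
        ring
    exact ⟨fun a => (gz a).1.2, fun a => (gz a).1.1, fun a _ => (gz a).2.2,
      fun a _ => (gz a).2.1, heq⟩
  -- bddBelow of the two feasible-value sets
  have hSA_bdd : BddBelow {v : ℝ | ∃ (x : Fin d → ℝ)
      (y1 y2 : (Fin d → ℝ) → Fin d → ℝ),
      (∑ i, α i * x i ≤ β) ∧
      (∀ b ∈ B, ∑ i, α i * y1 b i = β) ∧ (∀ b ∈ B, ∑ i, α i * y2 b i = β) ∧
      v = (∑ a ∈ A, ω a * lpNorm pA (x - a)) +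
        ∑ b ∈ B, ω b * (lpNorm pA (x - y1 b) + lpNorm pH (y1 b - y2 b) +
          lpNorm pB (y2 b - b))} := by
    refine ⟨0, ?_⟩
    rintro v ⟨x, y1, y2, hx, h1, h2, rfl⟩
    have t1 : 0 ≤ ∑ a ∈ A, ω a * lpNorm pA (x - a) :=
      Finset.sum_nonneg fun a ha => mul_nonneg (hωA a ha).le (lpNorm_nonneg hpA _)
    have t2 : 0 ≤ ∑ b ∈ B, ω b * (lpNorm pA (x - y1 b) + lpNorm pH (y1 b - y2 b) +
        lpNorm pB (y2 b - b)) := by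
      refine Finset.sum_nonneg fun b hb => mul_nonneg (hωB b hb).le ?_
      have u1 := lpNorm_nonneg hpA (x - y1 b)
      have u2 := lpNorm_nonneg hpH (y1 b - y2 b)
      have u3 := lpNorm_nonneg hpB (y2 b - b)
      linarith
    linarith
  have hSB_bdd : BddBelow {v : ℝ | ∃ (x : Fin d → ℝ)
      (y1 y2 : (Fin d → ℝ) → Fin d → ℝ),
      (β ≤ ∑ i, α i * x i) ∧
      (∀ a ∈ A, ∑ i, α i * y1 a i = β) ∧ (∀ a ∈ A, ∑ i, α i * y2 a i = β) ∧
      v = (∑ b ∈ B, ω b * lpNorm pB (x - b)) +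
        ∑ a ∈ A, ω a * (lpNorm pB (x - y1 a) + lpNorm pH (y1 a - y2 a) +
          lpNorm pA (y2 a - a))} := by
    refine ⟨0, ?_⟩
    rintro v ⟨x, y1, y2, hx, h1, h2, rfl⟩
    have t1 : 0 ≤ ∑ b ∈ B, ω b * lpNorm pB (x - b) :=
      Finset.sum_nonneg fun b hb => mul_nonneg (hωB b hb).le (lpNorm_nonneg hpB _)
    have t2 : 0 ≤ ∑ a ∈ A, ω a * (lpNorm pB (x - y1 a) + lpNorm pH (y1 a - y2 a) +
        lpNorm pA (y2 a - a)) := by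
      refine Finset.sum_nonneg fun a ha => mul_nonneg (hωA a ha).le ?_
      have u1 := lpNorm_nonneg hpB (x - y1 a)
      have u2 := lpNorm_nonneg hpH (y1 a - y2 a)
      have u3 := lpNorm_nonneg hpA (y2 a - a)
      linarith
    linarith
  -- vTA ≤ g x on the A side, vTB ≤ g x on the strict B side
  have hvTA_le : ∀ x : Fin d → ℝ, (∑ i, α i * x i ≤ β) →
      vTA ≤ (∑ a ∈ A, ω a * transDist pA pB pH α β x a) +
        ∑ b ∈ B, ω b * transDist pA pB pH α β x b := by
    intro x hx
    obtain ⟨y1, y2, h1, h2, heq⟩ := hA_val x hx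
    rw [hvTA]
    exact csInf_le hSA_bdd ⟨x, y1, y2, hx, h1, h2, heq.symm⟩
  have hvTB_le : ∀ x : Fin d → ℝ, ¬(∑ i, α i * x i ≤ β) →
      vTB ≤ (∑ a ∈ A, ω a * transDist pA pB pH α β x a) +
        ∑ b ∈ B, ω b * transDist pA pB pH α β x b := by
    intro x hx
    obtain ⟨y1, y2, h1, h2, heq⟩ := hB_val x hx
    rw [hvTB]
    exact csInf_le hSB_bdd ⟨x, y1, y2, (not_le.mp hx).le, h1, h2, heq.symm⟩
  -- iInf ≤ vTA
  have hle_vTA : (⨅ x : Fin d → ℝ,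
      ((∑ a ∈ A, ω a * transDist pA pB pH α β x a) +
        ∑ b ∈ B, ω b * transDist pA pB pH α β x b)) ≤ vTA := by
    rw [hvTA]
    refine le_csInf ⟨_, x0, fun _ => x0, fun _ => x0, le_of_eq hx0, fun _ _ => hx0,
      fun _ _ => hx0, rfl⟩ ?_
    rintro v ⟨x, y1, y2, hx, hy1, hy2, rfl⟩
    refine le_trans (ciInf_le hgbdd x) ?_
    have e1 : ∑ a ∈ A, ω a * transDist pA pB pH α β x a
        = ∑ a ∈ A, ω a * lpNorm pA (x - a) :=
      Finset.sum_congr rfl fun a ha => by rw [hTaa x a hx (hAH a ha)]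
    have e2 : ∑ b ∈ B, ω b * transDist pA pB pH α β x b
        ≤ ∑ b ∈ B, ω b * (lpNorm pA (x - y1 b) + lpNorm pH (y1 b - y2 b) +
          lpNorm pB (y2 b - b)) := by
      refine Finset.sum_le_sum fun b hb => mul_le_mul_of_nonneg_left ?_ (hωB b hb).le
      rw [hTab x b hx (not_le.mpr (hBH b hb)), lpNorm_sub_comm hpA x (y1 b)]
      exact ciInf_le (gate_bdd hpA hpB hpH α β x b) ⟨(y1 b, y2 b), hy1 b hb, hy2 b hb⟩
    linarith
  -- iInf ≤ vTB
  have hle_vTB : (⨅ x : Fin d → ℝ,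
      ((∑ a ∈ A, ω a * transDist pA pB pH α β x a) +
        ∑ b ∈ B, ω b * transDist pA pB pH α β x b)) ≤ vTB := by
    rw [hvTB]
    refine le_csInf ⟨_, x0, fun _ => x0, fun _ => x0, le_of_eq hx0.symm, fun _ _ => hx0,
      fun _ _ => hx0, rfl⟩ ?_
    rintro v ⟨x, y1, y2, hx, hy1, hy2, rfl⟩
    rcases eq_or_lt_of_le hx with heq | hlt
    · -- boundary case: perturb
      apply le_of_forall_pos_le_add
      intro ε hε
      obtain ⟨KK, hKKdef⟩ : ∃ KK : ℝ,
          KK = ((∑ b ∈ B, ω b) + ∑ a ∈ A, ω a) * lpNorm pB α := ⟨_, rfl⟩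
      have hωBs : 0 ≤ ∑ b ∈ B, ω b := Finset.sum_nonneg fun b hb => (hωB b hb).le
      have hωAs : 0 ≤ ∑ a ∈ A, ω a := Finset.sum_nonneg fun a ha => (hωA a ha).le
      have hKKnn : 0 ≤ KK := by
        rw [hKKdef]; exact mul_nonneg (by linarith) (lpNorm_nonneg hpB α)
      obtain ⟨δ, hδdef⟩ : ∃ δ : ℝ, δ = ε / (KK + 1) := ⟨_, rfl⟩
      have hδpos : 0 < δ := by rw [hδdef]; exact div_pos hε (by linarith)
      have hsumδ : ∑ i, α i * (x + δ • α) i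
          = (∑ i, α i * x i) + δ * ∑ i, α i * α i := by
        simp only [Pi.add_apply, Pi.smul_apply, smul_eq_mul, mul_add]
        rw [Finset.sum_add_distrib, Finset.mul_sum]
        congr 1
        exact Finset.sum_congr rfl fun i _ => by ring
      have hxδ : ¬(∑ i, α i * (x + δ • α) i ≤ β) := by
        rw [hsumδ, ← heq]
        have := mul_pos hδpos hs
        push_neg
        linarith
      refine le_trans (ciInf_le hgbdd (x + δ • α)) ?_
      have hb' : ∀ b ∈ B, ω b * transDist pA pB pH α β (x + δ • α) b ≤
          ω b * (lpNorm pB (x - b) + δ * lpNorm pB α) := by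
        intro b hb
        refine mul_le_mul_of_nonneg_left ?_ (hωB b hb).le
        rw [hTbb _ b hxδ (not_le.mpr (hBH b hb))]
        have hrw : (x + δ • α) - b = (x - b) + δ • α := by
          funext i; simp [Pi.add_apply, Pi.sub_apply, Pi.smul_apply]; ring
        rw [hrw]
        have h := lpNorm_add_smul_le hpB (x - b) α δ
        rwa [abs_of_pos hδpos] at h
      have ha' : ∀ a ∈ A, ω a * transDist pA pB pH α β (x + δ • α) a ≤
          ω a * ((lpNorm pB (x - y1 a) + lpNorm pH (y1 a - y2 a) + lpNorm pA (y2 a - a)) +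
            δ * lpNorm pB α) := by
        intro a ha
        refine mul_le_mul_of_nonneg_left ?_ (hωA a ha).le
        rw [hTba _ a hxδ (hAH a ha)]
        refine le_trans (ciInf_le (gate_bdd hpA hpB hpH α β a (x + δ • α))
          ⟨(y2 a, y1 a), hy2 a ha, hy1 a ha⟩) ?_
        have hrw : y1 a - (x + δ • α) = (y1 a - x) + (-δ) • α := by
          funext i; simp [Pi.add_apply, Pi.sub_apply, Pi.smul_apply]; ring
        rw [hrw]
        have h2 := lpNorm_add_smul_le hpB (y1 a - x) α (-δ)
        rw [abs_neg, abs_of_pos hδpos] at h2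
        have h3 : lpNorm pB (y1 a - x) = lpNorm pB (x - y1 a) := lpNorm_sub_comm hpB _ _
        have h4 : lpNorm pH ((y2 a) - (y1 a)) = lpNorm pH ((y1 a) - (y2 a)) :=
          lpNorm_sub_comm hpH _ _
        linarith
      have hsum1 : ∑ b ∈ B, ω b * transDist pA pB pH α β (x + δ • α) b ≤
          (∑ b ∈ B, ω b * lpNorm pB (x - b)) + (∑ b ∈ B, ω b) * (δ * lpNorm pB α) := by
        refine le_trans (Finset.sum_le_sum hb') (le_of_eq ?_)
        rw [Finset.sum_mul, ← Finset.sum_add_distrib]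
        exact Finset.sum_congr rfl fun b hb => by ring
      have hsum2 : ∑ a ∈ A, ω a * transDist pA pB pH α β (x + δ • α) a ≤
          (∑ a ∈ A, ω a * (lpNorm pB (x - y1 a) + lpNorm pH (y1 a - y2 a) +
            lpNorm pA (y2 a - a))) + (∑ a ∈ A, ω a) * (δ * lpNorm pB α) := by
        refine le_trans (Finset.sum_le_sum ha') (le_of_eq ?_)
        rw [Finset.sum_mul, ← Finset.sum_add_distrib]
        exact Finset.sum_congr rfl fun a ha => by ring
      have hKKδ : (∑ b ∈ B, ω b) * (δ * lpNorm pB α) +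
          (∑ a ∈ A, ω a) * (δ * lpNorm pB α) = KK * δ := by
        rw [hKKdef]; ring
      have hδKK : KK * δ ≤ ε := by
        rw [hδdef, mul_div_assoc']
        rw [div_le_iff₀ (by linarith : (0:ℝ) < KK + 1)]
        nlinarith [hε.le, hKKnn]
      linarith
    · -- strict case
      refine le_trans (ciInf_le hgbdd x) ?_
      have hxg : ¬(∑ i, α i * x i ≤ β) := not_le.mpr hlt
      have e1 : ∑ b ∈ B, ω b * transDist pA pB pH α β x b
          = ∑ b ∈ B, ω b * lpNorm pB (x - b) :=
        Finset.sum_congr rfl fun b hb => by rw [hTbb x b hxg (not_le.mpr (hBH b hb))]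
      have e2 : ∑ a ∈ A, ω a * transDist pA pB pH α β x a
          ≤ ∑ a ∈ A, ω a * (lpNorm pB (x - y1 a) + lpNorm pH (y1 a - y2 a) +
            lpNorm pA (y2 a - a)) := by
        refine Finset.sum_le_sum fun a ha => mul_le_mul_of_nonneg_left ?_ (hωA a ha).le
        rw [hTba x a hxg (hAH a ha), lpNorm_sub_comm hpB x (y1 a),
          lpNorm_sub_comm hpH (y1 a) (y2 a)]
        refine le_trans (ciInf_le (gate_bdd hpA hpB hpH α β a x)
          ⟨(y2 a, y1 a), hy2 a ha, hy1 a ha⟩) (le_of_eq (by ring))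
      linarith
  -- part 1
  have hpart1 : (⨅ x : Fin d → ℝ,
      ((∑ a ∈ A, ω a * transDist pA pB pH α β x a) +
        ∑ b ∈ B, ω b * transDist pA pB pH α β x b)) = min vTA vTB := by
    refine le_antisymm (le_min hle_vTA hle_vTB) (le_ciInf fun x => ?_)
    by_cases hx : ∑ i, α i * x i ≤ β
    · exact le_trans (min_le_left _ _) (hvTA_le x hx)
    · exact le_trans (min_le_right _ _) (hvTB_le x hx)
  refine ⟨hpart1, ?_⟩
  -- part 2
  intro x hxmin
  have hgx : (∑ a ∈ A, ω a * transDist pA pB pH α β x a) +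
      ∑ b ∈ B, ω b * transDist pA pB pH α β x b = min vTA vTB := by
    rw [← hpart1]
    exact le_antisymm (le_ciInf hxmin) (ciInf_le hgbdd x)
  by_cases hx : ∑ i, α i * x i ≤ β
  · left
    obtain ⟨y1, y2, h1, h2, heq⟩ := hA_val x hx
    exact ⟨hx, y1, y2, h1, h2, heq.trans hgx⟩
  · right
    obtain ⟨y1, y2, h1, h2, heq⟩ := hB_val x hx
    exact ⟨(not_le.mp hx).le, y1, y2, h1, h2, heq.trans hgx⟩
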